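/- For every real ε with 0 < ε < 1 there exists w₀ such that for every integer w ≥ w₀, every real R ≥ w³, every point x ∈ ℝ², and every lattice point v ∈ ℤ² with ‖v − x‖₂ ≤ R, the number of lattice points z ∈ ℤ² with ‖z − v‖_∞ ≤ w and ‖z − x‖₂ ≤ R is at least ((1−ε)/2)·(2w+1)². -/

import Mathlib

open scoped Classical

lemma aux_sqrt_le {A R : ℝ} (hR : 0 ≤ R) (h : A ≤ R^2) : Real.sqrt A ≤ R := by
  calc Real.sqrt A ≤ Real.sqrt (R^2) := Real.sqrt_le_sqrt h
    _ = R := Real.sqrt_sq hR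

lemma aux_sq_le {A R : ℝ} (hA : 0 ≤ A) (h : Real.sqrt A ≤ R) : A ≤ R^2 := by
  nlinarith [Real.sq_sqrt hA, Real.sqrt_nonneg A]

set_option maxHeartbeats 2000000 in
lemma row_bound (v1 : ℤ) (w : ℕ) (a c : ℝ) (ha : 2*(w:ℝ)^2 ≤ |a|) (hw : 1 ≤ w) :
    ((Finset.Icc (v1 - w) (v1 + w)).filter
      (fun z1 : ℤ => |((z1:ℝ) - v1) * a + c| < (w:ℝ)^2)).card ≤ 2 := by
  have hw1 : (1:ℝ) ≤ (w:ℝ) := by exact_mod_cast hw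
  have ha0 : 0 < |a| := by nlinarith
  have hane : a ≠ 0 := by simpa [abs_pos] using ha0
  set m : ℝ := (v1:ℝ) - c / a with hm
  have key : ∀ z1 : ℤ, |((z1:ℝ) - v1) * a + c| < (w:ℝ)^2 → |(z1:ℝ) - m| ≤ 1/2 := by
    intro z1 hz
    have heq : ((z1:ℝ) - m) * a = ((z1:ℝ) - v1) * a + c := by
      rw [hm, sub_mul, sub_mul, div_mul_cancel₀ c hane]; ring
    have h2 : |(z1:ℝ) - m| * |a| < (w:ℝ)^2 := by rw [← abs_mul, heq]; exact hz
    have h3 : |(z1:ℝ) - m| * |a| ≤ (1/2) * |a| := by nlinarith [abs_nonneg ((z1:ℝ) - m)]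
    · nlinarith [abs_nonneg ((z1:ℝ) - m)]
  have hsub : ((Finset.Icc (v1 - w) (v1 + w)).filter
      (fun z1 : ℤ => |((z1:ℝ) - v1) * a + c| < (w:ℝ)^2)) ⊆
      Finset.Icc ⌈m - 1/2⌉ ⌊m + 1/2⌋ := by
    intro z1 hz1
    simp only [Finset.mem_filter] at hz1
    have h := key z1 hz1.2
    rw [abs_le] at h
    rw [Finset.mem_Icc]
    constructor
    · exact Int.ceil_le.2 (by linarith [h.1])
    · exact Int.le_floor.2 (by linarith [h.2])
  have hcard := Finset.card_le_card hsub
  have h1 : ⌊m + 1/2⌋ ≤ ⌈m - 1/2⌉ + 1 := by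
    have : ⌈m - 1/2⌉ + 1 = ⌈m + 1/2⌉ := by
      rw [show m + 1/2 = (m - 1/2) + 1 by ring, Int.ceil_add_one]
    rw [this]; exact Int.floor_le_ceil _
  rw [Int.card_Icc] at hcard
  omega

lemma bad_bound (v1 v2 : ℤ) (w : ℕ) (hw : 1 ≤ w) (a b : ℝ) (ha : 2*(w:ℝ)^2 ≤ |a|) :
    ((Finset.Icc ((v1 - w, v2 - w) : ℤ×ℤ) (v1 + w, v2 + w)).filter
      (fun z : ℤ×ℤ => |((z.1:ℝ) - v1) * a + ((z.2:ℝ) - v2) * b| < (w:ℝ)^2)).card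
      ≤ (2*w+1) * 2 := by
  set B := ((Finset.Icc ((v1 - w, v2 - w) : ℤ×ℤ) (v1 + w, v2 + w)).filter
      (fun z : ℤ×ℤ => |((z.1:ℝ) - v1) * a + ((z.2:ℝ) - v2) * b| < (w:ℝ)^2)) with hB
  have hmem : ∀ z ∈ B, z.2 ∈ Finset.Icc (v2 - (w:ℤ)) (v2 + w) := by
    intro z hz
    rw [hB, Finset.mem_filter, Finset.mem_Icc, Prod.le_def, Prod.le_def] at hz
    rw [Finset.mem_Icc]
    exact ⟨hz.1.1.2, hz.1.2.2⟩
  rw [Finset.card_eq_sum_card_fiberwise hmem]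
  have hfib : ∀ y ∈ Finset.Icc (v2 - (w:ℤ)) (v2 + w),
      (B.filter (fun z => z.2 = y)).card ≤ 2 := by
    intro y hy
    have hrow := row_bound v1 w a (((y:ℝ) - v2) * b) ha hw
    refine le_trans ?_ hrow
    apply Finset.card_le_card_of_injOn (fun z => z.1)
    · intro z hz
      rw [Finset.mem_coe, Finset.mem_filter, hB, Finset.mem_filter, Finset.mem_Icc, Prod.le_def, Prod.le_def] at hz
      rw [Finset.mem_coe, Finset.mem_filter, Finset.mem_Icc]
      obtain ⟨⟨⟨⟨h1, h2⟩, h3, h4⟩, h5⟩, h6⟩ := hz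
      subst h6
      exact ⟨⟨h1, h3⟩, h5⟩
    · intro z hz z' hz' hzz
      rw [Finset.mem_coe, Finset.mem_filter] at hz hz'
      exact Prod.ext hzz (hz.2.trans hz'.2.symm)
  calc ∑ y ∈ Finset.Icc (v2 - (w:ℤ)) (v2 + w), (B.filter (fun z => z.2 = y)).card
      ≤ ∑ y ∈ Finset.Icc (v2 - (w:ℤ)) (v2 + w), 2 := Finset.sum_le_sum hfib
    _ = (2*w+1) * 2 := by
        rw [Finset.sum_const, Int.card_Icc, smul_eq_mul]
        congr 1; omega

set_option maxHeartbeats 2000000 in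
theorem stmt7 (ε : ℝ) (hε : 0 < ε) (hε1 : ε < 1) :
    ∃ w₀ : ℕ, ∀ w : ℕ, w₀ ≤ w → ∀ R : ℝ, (w : ℝ)^3 ≤ R → ∀ x : ℝ × ℝ, ∀ v : ℤ × ℤ,
    Real.sqrt (((v.1 : ℝ) - x.1)^2 + ((v.2 : ℝ) - x.2)^2) ≤ R →
    (((Finset.Icc (v.1 - w, v.2 - w) (v.1 + w, v.2 + w)).filter
        (fun z : ℤ × ℤ =>
          Real.sqrt (((z.1 : ℝ) - x.1)^2 + ((z.2 : ℝ) - x.2)^2) ≤ R)).card : ℝ)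
      ≥ ((1 - ε)/2) * (2*(w : ℝ) + 1)^2 := by
  refine ⟨max 4 ⌈2/ε⌉₊, ?_⟩
  intro w hw R hR x v hv
  have hw4 : (4:ℕ) ≤ w := le_trans (le_max_left _ _) hw
  have hw1 : (1:ℕ) ≤ w := by omega
  have hwR : (4:ℝ) ≤ (w:ℝ) := by exact_mod_cast hw4
  have hw0 : (0:ℝ) ≤ (w:ℝ) := by positivity
  have hwε : (2:ℝ) ≤ ε * (2*(w:ℝ)+1) := by
    have h2 : (⌈2/ε⌉₊ : ℕ) ≤ w := le_trans (le_max_right _ _) hw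
    have h1 : (2/ε : ℝ) ≤ (w:ℝ) :=
      le_trans (Nat.le_ceil (2/ε)) (by exact_mod_cast h2)
    have h3 : 2 ≤ ε * w := by rw [div_le_iff₀ hε] at h1; linarith
    nlinarith
  have hcube : 3*(w:ℝ) ≤ (w:ℝ)^3 := by
    nlinarith [mul_nonneg (sub_nonneg.2 hwR) hw0,
      mul_nonneg (mul_nonneg (sub_nonneg.2 hwR) hw0) hw0]
  have hRw : 3*(w:ℝ) ≤ R := le_trans hcube hR
  have hR0 : (0:ℝ) ≤ R := le_trans (by positivity) hR
  obtain ⟨a, hadef⟩ : ∃ t : ℝ, t = x.1 - (v.1:ℝ) := ⟨_, rfl⟩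
  obtain ⟨b, hbdef⟩ : ∃ t : ℝ, t = x.2 - (v.2:ℝ) := ⟨_, rfl⟩
  have hv' : Real.sqrt (a^2 + b^2) ≤ R := by
    rw [show a^2+b^2 = ((v.1:ℝ)-x.1)^2 + ((v.2:ℝ)-x.2)^2 by rw [hadef, hbdef]; ring]
    exact hv
  have hsum : a^2 + b^2 ≤ R^2 := aux_sq_le (by positivity) hv'
  obtain ⟨S, hS⟩ : ∃ S, S = Finset.Icc ((v.1 - w, v.2 - w) : ℤ×ℤ) (v.1 + w, v.2 + w) :=
    ⟨_, rfl⟩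
  rw [← hS]
  have hcardS : S.card = (2*w+1)^2 := by
    rw [hS, show (Finset.Icc ((v.1 - w, v.2 - w) : ℤ×ℤ) (v.1 + w, v.2 + w))
        = Finset.Icc (v.1-w) (v.1+w) ×ˢ Finset.Icc (v.2-w) (v.2+w) from rfl]
    rw [Finset.card_product, Int.card_Icc, Int.card_Icc]
    have h1 : (v.1 + w + 1 - (v.1 - w)).toNat = 2*w+1 := by omega
    have h2 : (v.2 + w + 1 - (v.2 - w)).toNat = 2*w+1 := by omega
    rw [h1, h2]; ring
  have hmem : ∀ z : ℤ×ℤ, z ∈ S →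
      -(w:ℝ) ≤ (z.1:ℝ) - v.1 ∧ (z.1:ℝ) - v.1 ≤ w ∧ -(w:ℝ) ≤ (z.2:ℝ) - v.2 ∧ (z.2:ℝ) - v.2 ≤ w := by
    intro z hz
    rw [hS, Finset.mem_Icc, Prod.le_def, Prod.le_def] at hz
    obtain ⟨⟨h1, h2⟩, h3, h4⟩ := hz
    have r1 : ((v.1:ℝ) - w) ≤ z.1 := by exact_mod_cast h1
    have r2 : ((v.2:ℝ) - w) ≤ z.2 := by exact_mod_cast h2
    have r3 : (z.1:ℝ) ≤ (v.1:ℝ) + w := by exact_mod_cast h3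
    have r4 : (z.2:ℝ) ≤ (v.2:ℝ) + w := by exact_mod_cast h4
    refine ⟨by linarith, by linarith, by linarith, by linarith⟩
  by_cases hc : Real.sqrt (a^2+b^2) ≤ R - 3*(w:ℝ)
  · -- Case 1: v is deep inside the ball; all points qualify
    have hsum1 : a^2 + b^2 ≤ (R - 3*w)^2 := aux_sq_le (by positivity) hc
    have hba : |a| ≤ R - 3*w := by nlinarith [sq_abs a, abs_nonneg a, sq_nonneg b]
    have hbb : |b| ≤ R - 3*w := by nlinarith [sq_abs b, abs_nonneg b, sq_nonneg a]
    rw [abs_le] at hba hbb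
    have hfull : S.filter (fun z : ℤ × ℤ =>
          Real.sqrt (((z.1 : ℝ) - x.1)^2 + ((z.2 : ℝ) - x.2)^2) ≤ R) = S := by
      apply Finset.filter_true_of_mem
      intro z hz
      obtain ⟨m1, m2, m3, m4⟩ := hmem z hz
      apply aux_sqrt_le hR0
      have e1 : (z.1:ℝ) - x.1 = ((z.1:ℝ) - v.1) - a := by rw [hadef]; ring
      have e2 : (z.2:ℝ) - x.2 = ((z.2:ℝ) - v.2) - b := by rw [hbdef]; ring
      rw [e1, e2]
      nlinarith [mul_nonneg (by linarith : (0:ℝ) ≤ (w:ℝ) - ((z.1:ℝ) - v.1)) (by linarith : (0:ℝ) ≤ (R - 3*w) - a),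
        mul_nonneg (by linarith : (0:ℝ) ≤ (w:ℝ) + ((z.1:ℝ) - v.1)) (by linarith : (0:ℝ) ≤ (R - 3*w) + a),
        mul_nonneg (by linarith : (0:ℝ) ≤ (w:ℝ) - ((z.2:ℝ) - v.2)) (by linarith : (0:ℝ) ≤ (R - 3*w) - b),
        mul_nonneg (by linarith : (0:ℝ) ≤ (w:ℝ) + ((z.2:ℝ) - v.2)) (by linarith : (0:ℝ) ≤ (R - 3*w) + b),
        mul_nonneg hw0 hR0]
    rw [hfull, hcardS]
    push_cast
    nlinarith [sq_nonneg (2*(w:ℝ)+1)]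
  · -- Case 2: v is near the boundary
    push_neg at hc
    have h0R : (0:ℝ) ≤ R - 3*w := by linarith
    have hd2 : (R - 3*w)^2 < a^2 + b^2 := by
      nlinarith [mul_self_lt_mul_self h0R hc,
        Real.sq_sqrt (show (0:ℝ) ≤ a^2+b^2 by positivity)]
    have hlarge : 8*(w:ℝ)^4 ≤ (R-3*w)^2 := by
      have h0 : 0 ≤ (w:ℝ)^3 - 3*w := by linarith
      have h1 : (w:ℝ)^3 - 3*w ≤ R - 3*w := by linarith
      have h3 : ((w:ℝ)^3 - 3*w)^2 ≤ (R - 3*w)^2 := by nlinarith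
      nlinarith [mul_nonneg (mul_nonneg (sub_nonneg.2 hwR)
          (by linarith : (0:ℝ) ≤ (w:ℝ) + 4)) (by positivity : (0:ℝ) ≤ (w:ℝ)^4),
        sq_nonneg ((w:ℝ)^2), pow_nonneg hw0 4]
    have h2 : 2*(w:ℝ)^2 ≤ |a| ∨ 2*(w:ℝ)^2 ≤ |b| := by
      rcases le_total (b^2) (a^2) with h | h
      · left
        have h4 : 4*(w:ℝ)^4 ≤ a^2 := by nlinarith
        nlinarith [sq_abs a, abs_nonneg a, sq_nonneg ((w:ℝ)^2)]
      · right
        have h4 : 4*(w:ℝ)^4 ≤ b^2 := by nlinarith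
        nlinarith [sq_abs b, abs_nonneg b, sq_nonneg ((w:ℝ)^2)]
    obtain ⟨G, hG⟩ : ∃ G, G = S.filter
        (fun z : ℤ×ℤ => (w:ℝ)^2 ≤ ((z.1:ℝ) - v.1)*a + ((z.2:ℝ) - v.2)*b) := ⟨_, rfl⟩
    obtain ⟨N, hN⟩ : ∃ N, N = S.filter
        (fun z : ℤ×ℤ => ((z.1:ℝ) - v.1)*a + ((z.2:ℝ) - v.2)*b ≤ -(w:ℝ)^2) := ⟨_, rfl⟩
    obtain ⟨Bd, hBd⟩ : ∃ Bd, Bd = S.filter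
        (fun z : ℤ×ℤ => |((z.1:ℝ) - v.1)*a + ((z.2:ℝ) - v.2)*b| < (w:ℝ)^2) := ⟨_, rfl⟩
    have hGsub : G ⊆ S.filter (fun z : ℤ × ℤ =>
        Real.sqrt (((z.1 : ℝ) - x.1)^2 + ((z.2 : ℝ) - x.2)^2) ≤ R) := by
      intro z hz
      rw [hG, Finset.mem_filter] at hz
      obtain ⟨hzS, hzf⟩ := hz
      rw [Finset.mem_filter]
      refine ⟨hzS, ?_⟩
      obtain ⟨m1, m2, m3, m4⟩ := hmem z hzS
      apply aux_sqrt_le hR0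
      have e1 : (z.1:ℝ) - x.1 = ((z.1:ℝ) - v.1) - a := by rw [hadef]; ring
      have e2 : (z.2:ℝ) - x.2 = ((z.2:ℝ) - v.2) - b := by rw [hbdef]; ring
      rw [e1, e2]
      nlinarith [mul_nonneg (by linarith : (0:ℝ) ≤ (w:ℝ) - ((z.1:ℝ) - v.1)) (by linarith : (0:ℝ) ≤ (w:ℝ) + ((z.1:ℝ) - v.1)),
        mul_nonneg (by linarith : (0:ℝ) ≤ (w:ℝ) - ((z.2:ℝ) - v.2)) (by linarith : (0:ℝ) ≤ (w:ℝ) + ((z.2:ℝ) - v.2))]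
    have hmemneg : ∀ z : ℤ×ℤ, z ∈ S → (2*v.1 - z.1, 2*v.2 - z.2) ∈ S := by
      intro z hz
      rw [hS, Finset.mem_Icc, Prod.le_def, Prod.le_def] at hz ⊢
      obtain ⟨⟨h1', h2'⟩, h3', h4'⟩ := hz
      exact ⟨⟨by omega, by omega⟩, by omega, by omega⟩
    have hflip : ∀ z : ℤ×ℤ, (((2*v.1 - z.1 : ℤ):ℝ) - v.1)*a + (((2*v.2 - z.2 : ℤ):ℝ) - v.2)*b
        = -((((z.1:ℝ) - v.1))*a + (((z.2:ℝ) - v.2))*b) := by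
      intro z; push_cast; ring
    have hNG : N.card = G.card := by
      apply Finset.card_bij (fun z _ => (2*v.1 - z.1, 2*v.2 - z.2))
      · intro z hz
        rw [hN, Finset.mem_filter] at hz
        rw [hG, Finset.mem_filter]
        refine ⟨hmemneg z hz.1, ?_⟩
        rw [hflip z]
        linarith [hz.2]
      · intro z1 hz1 z2 hz2 h
        rw [Prod.ext_iff] at h
        obtain ⟨ha', hb'⟩ := h
        simp only at ha' hb'
        exact Prod.ext (by omega) (by omega)
      · intro z hz
        rw [hG, Finset.mem_filter] at hz
        refine ⟨(2*v.1 - z.1, 2*v.2 - z.2), ?_, ?_⟩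
        · rw [hN, Finset.mem_filter]
          refine ⟨hmemneg z hz.1, ?_⟩
          rw [hflip z]
          linarith [hz.2]
        · exact Prod.ext (by simp) (by simp)
    have hcover : S.card ≤ G.card + N.card + Bd.card := by
      have hsub : S ⊆ G ∪ N ∪ Bd := by
        intro z hz
        rcases le_or_gt ((w:ℝ)^2) (((z.1:ℝ) - v.1)*a + ((z.2:ℝ) - v.2)*b) with h | h
        · exact Finset.mem_union_left _ (Finset.mem_union_left _
            (by rw [hG, Finset.mem_filter]; exact ⟨hz, h⟩))
        · rcases le_or_gt (((z.1:ℝ) - v.1)*a + ((z.2:ℝ) - v.2)*b) (-(w:ℝ)^2) with h' | h'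
          · exact Finset.mem_union_left _ (Finset.mem_union_right _
              (by rw [hN, Finset.mem_filter]; exact ⟨hz, h'⟩))
          · refine Finset.mem_union_right _ ?_
            rw [hBd, Finset.mem_filter]
            exact ⟨hz, abs_lt.2 ⟨by linarith, h⟩⟩
      calc S.card ≤ (G ∪ N ∪ Bd).card := Finset.card_le_card hsub
        _ ≤ (G ∪ N).card + Bd.card := Finset.card_union_le _ _
        _ ≤ G.card + N.card + Bd.card := by
            have := Finset.card_union_le G N; omega
    have hBdcard : Bd.card ≤ (2*w+1)*2 := by
      rcases h2 with ha | hb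
      · rw [hBd, hS]
        exact bad_bound v.1 v.2 w hw1 a b ha
      · rw [hBd, hS]
        have hswap : ((Finset.Icc ((v.1 - w, v.2 - w):ℤ×ℤ) (v.1+w, v.2+w)).filter
            (fun z : ℤ×ℤ => |((z.1:ℝ) - v.1)*a + ((z.2:ℝ) - v.2)*b| < (w:ℝ)^2)).card
            = ((Finset.Icc ((v.2 - w, v.1 - w):ℤ×ℤ) (v.2+w, v.1+w)).filter
            (fun z : ℤ×ℤ => |((z.1:ℝ) - v.2)*b + ((z.2:ℝ) - v.1)*a| < (w:ℝ)^2)).card := by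
          apply Finset.card_bij (fun z _ => (z.2, z.1))
          · intro z hz
            rw [Finset.mem_filter, Finset.mem_Icc, Prod.le_def, Prod.le_def] at hz
            rw [Finset.mem_filter, Finset.mem_Icc, Prod.le_def, Prod.le_def]
            obtain ⟨⟨⟨h1', h2'⟩, h3', h4'⟩, h5'⟩ := hz
            refine ⟨⟨⟨h2', h1'⟩, h4', h3'⟩, ?_⟩
            rw [add_comm] at h5'
            exact h5'
          · intro z1 hz1 z2 hz2 h
            rw [Prod.ext_iff] at h
            obtain ⟨ha', hb'⟩ := h
            simp only at ha' hb'
            exact Prod.ext hb' ha'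
          · intro z hz
            rw [Finset.mem_filter, Finset.mem_Icc, Prod.le_def, Prod.le_def] at hz
            obtain ⟨⟨⟨h1', h2'⟩, h3', h4'⟩, h5'⟩ := hz
            refine ⟨(z.2, z.1), ?_, rfl⟩
            rw [Finset.mem_filter, Finset.mem_Icc, Prod.le_def, Prod.le_def]
            refine ⟨⟨⟨h2', h1'⟩, h4', h3'⟩, ?_⟩
            rw [add_comm] at h5'
            exact h5'
        rw [hswap]
        exact bad_bound v.2 v.1 w hw1 b a hb
    have hfinal1 : G.card ≤ (S.filter (fun z : ℤ × ℤ =>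
        Real.sqrt (((z.1 : ℝ) - x.1)^2 + ((z.2 : ℝ) - x.2)^2) ≤ R)).card :=
      Finset.card_le_card hGsub
    have hnat : (2*w+1)^2 ≤ 2 * G.card + (2*w+1)*2 := by omega
    have h5 : (2*(w:ℝ)+1)^2 ≤ 2*(G.card:ℝ) + (2*(w:ℝ)+1)*2 := by
      exact_mod_cast hnat
    have hGR : ((1-ε)/2) * (2*(w:ℝ)+1)^2 ≤ (G.card : ℝ) := by
      nlinarith [hwε, h5]
    refine le_trans hGR ?_
    exact_mod_cast hfinal1
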